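/- Let P be a convex polygon region given as the intersection of half-planes and suppose C = core(u,v) is convex and lies strictly to the left of the directed segment from i to j. Then the function mapping a point x of C to the angle ∠(i,x,j) attains its maximum on the boundary of C, and this function is unimodal along the boundary of C. -/

import Mathlib

open Set

noncomputable section

abbrev E2 := EuclideanSpace ℝ (Fin 2)

/-- 2D cross product in the Euclidean plane. -/
def cross2 (a b : E2) : ℝ := a 0 * b 1 - a 1 * b 0

open InnerProductGeometry Real
open scoped RealInnerProductSpace

lemma inner2 (u v : E2) : ⟪u, v⟫ = u 0 * v 0 + u 1 * v 1 := by
  simp [PiLp.inner_apply, Fin.sum_univ_two, RCLike.inner_apply, mul_comm]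

lemma normsq2 (u : E2) : ‖u‖ * ‖u‖ = u 0 * u 0 + u 1 * u 1 := by
  rw [← real_inner_self_eq_norm_mul_norm, inner2]

lemma cross_sub (i j x : E2) : cross2 (i - x) (j - x) = cross2 (j - i) (x - i) := by
  simp [cross2, PiLp.sub_apply]; ring

lemma sin_mul_norm (u v : E2) (h : 0 ≤ cross2 u v) :
    Real.sin (angle u v) * (‖u‖ * ‖v‖) = cross2 u v := by
  rw [sin_angle_mul_norm_mul_norm]
  have : ⟪u, u⟫ * ⟪v, v⟫ - ⟪u, v⟫ * ⟪u, v⟫ = cross2 u v * cross2 u v := by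
    simp only [inner2, cross2]; ring
  rw [this, Real.sqrt_mul_self h]

lemma cross_ne_left (u v : E2) (h : 0 < cross2 u v) : u ≠ 0 := by
  rintro rfl; simp [cross2] at h

lemma cross_ne_right (u v : E2) (h : 0 < cross2 u v) : v ≠ 0 := by
  rintro rfl; simp [cross2] at h

lemma sin_angle_pos (u v : E2) (h : 0 < cross2 u v) : 0 < Real.sin (angle u v) := by
  have hu : u ≠ 0 := cross_ne_left u v h
  have hv : v ≠ 0 := cross_ne_right u v h
  have hN : 0 < ‖u‖ * ‖v‖ := mul_pos (norm_pos_iff.mpr hu) (norm_pos_iff.mpr hv)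
  have := sin_mul_norm u v h.le
  nlinarith

lemma angle_mem (u v : E2) (h : 0 < cross2 u v) : 0 < angle u v ∧ angle u v < π := by
  have hs := sin_angle_pos u v h
  have h1 := angle_nonneg u v
  have h2 := angle_le_pi u v
  constructor
  · rcases h1.lt_or_eq with h' | h'
    · exact h'
    · exfalso; rw [← h'] at hs; simp at hs
  · rcases h2.lt_or_eq with h' | h'
    · exact h'
    · exfalso; rw [h'] at hs; simp at hs

/-- key identity -/
lemma key_id (u v : E2) (h : 0 ≤ cross2 u v) (γ : ℝ) :
    Real.sin γ * ⟪u, v⟫ - Real.cos γ * cross2 u v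
      = Real.sin (γ - angle u v) * (‖u‖ * ‖v‖) := by
  rw [Real.sin_sub, sub_mul, mul_assoc, mul_assoc, sin_mul_norm u v h,
    cos_angle_mul_norm_mul_norm]

lemma sin_sub_nonpos_iff {γ θ : ℝ} (hγ0 : 0 < γ) (hγπ : γ < π)
    (hθ0 : 0 < θ) (hθπ : θ < π) : Real.sin (γ - θ) ≤ 0 ↔ γ ≤ θ := by
  constructor
  · intro h
    by_contra hlt
    push_neg at hlt
    have : 0 < Real.sin (γ - θ) :=
      Real.sin_pos_of_pos_of_lt_pi (by linarith) (by linarith)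
    linarith
  · intro h
    have : 0 ≤ Real.sin (θ - γ) :=
      Real.sin_nonneg_of_nonneg_of_le_pi (by linarith) (by linarith)
    rw [← neg_sub, Real.sin_neg]
    linarith

lemma angle_ge_iff (u v : E2) (h : 0 < cross2 u v) (γ : ℝ) (hγ0 : 0 < γ) (hγπ : γ < π) :
    γ ≤ angle u v ↔ Real.sin γ * ⟪u, v⟫ - Real.cos γ * cross2 u v ≤ 0 := by
  obtain ⟨hθ0, hθπ⟩ := angle_mem u v h
  have hN : 0 < ‖u‖ * ‖v‖ :=
    mul_pos (norm_pos_iff.mpr (cross_ne_left u v h)) (norm_pos_iff.mpr (cross_ne_right u v h))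
  rw [key_id u v h.le, ← sin_sub_nonpos_iff hγ0 hγπ hθ0 hθπ]
  constructor
  · intro hs; nlinarith
  · intro hs; nlinarith

lemma angle_le_iff (u v : E2) (h : 0 < cross2 u v) (γ : ℝ) (hγ0 : 0 < γ) (hγπ : γ < π) :
    angle u v ≤ γ → 0 ≤ Real.sin γ * ⟪u, v⟫ - Real.cos γ * cross2 u v := by
  obtain ⟨hθ0, hθπ⟩ := angle_mem u v h
  intro hle
  rw [key_id u v h.le]
  have : 0 ≤ Real.sin (γ - angle u v) :=
    Real.sin_nonneg_of_nonneg_of_le_pi (by linarith) (by linarith)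
  have hN : 0 ≤ ‖u‖ * ‖v‖ := by positivity
  positivity

def fγ (i j : E2) (s c : ℝ) (x : E2) : ℝ :=
  s * ⟪i - x, j - x⟫ - c * cross2 (i - x) (j - x)

lemma fγ_coord (i j : E2) (s c : ℝ) (x : E2) :
    fγ i j s c x = s * ((i 0 - x 0) * (j 0 - x 0) + (i 1 - x 1) * (j 1 - x 1))
      - c * ((i 0 - x 0) * (j 1 - x 1) - (i 1 - x 1) * (j 0 - x 0)) := by
  simp [fγ, inner2, cross2, PiLp.sub_apply]

lemma convex_sublevel (i j : E2) (s c : ℝ) (hs : 0 ≤ s) :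
    Convex ℝ {x : E2 | fγ i j s c x ≤ 0} := by
  intro x hx y hy a b ha hb hab
  simp only [mem_setOf_eq] at hx hy ⊢
  rw [fγ_coord] at hx hy ⊢
  have e0 : (a • x + b • y) 0 = a * x 0 + b * y 0 := by
    simp [PiLp.add_apply, PiLp.smul_apply, smul_eq_mul]
  have e1 : (a • x + b • y) 1 = a * x 1 + b * y 1 := by
    simp [PiLp.add_apply, PiLp.smul_apply, smul_eq_mul]
  rw [e0, e1]
  have hb' : b = 1 - a := by linarith
  subst hb'
  nlinarith [sq_nonneg (x 0 - y 0), sq_nonneg (x 1 - y 1),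
    mul_nonneg (mul_nonneg ha hb) hs, mul_nonpos_of_nonneg_of_nonpos ha hx,
    mul_nonpos_of_nonneg_of_nonpos hb hy,
    mul_nonneg (mul_nonneg (mul_nonneg ha hb) hs) (sq_nonneg (x 0 - y 0)),
    mul_nonneg (mul_nonneg (mul_nonneg ha hb) hs) (sq_nonneg (x 1 - y 1))]

lemma fγ_convexOn (i j : E2) (s c : ℝ) (hs : 0 ≤ s) :
    ConvexOn ℝ univ (fγ i j s c) := by
  refine ⟨convex_univ, ?_⟩
  intro x _ y _ a b ha hb hab
  simp only [smul_eq_mul]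
  rw [fγ_coord, fγ_coord, fγ_coord]
  have e0 : (a • x + b • y) 0 = a * x 0 + b * y 0 := by
    simp [PiLp.add_apply, PiLp.smul_apply, smul_eq_mul]
  have e1 : (a • x + b • y) 1 = a * x 1 + b * y 1 := by
    simp [PiLp.add_apply, PiLp.smul_apply, smul_eq_mul]
  rw [e0, e1]
  have hb' : b = 1 - a := by linarith
  subst hb'
  nlinarith [mul_nonneg (mul_nonneg (mul_nonneg ha hb) hs) (sq_nonneg (x 0 - y 0)),
    mul_nonneg (mul_nonneg (mul_nonneg ha hb) hs) (sq_nonneg (x 1 - y 1))]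

lemma eangle (i x j : E2) :
    EuclideanGeometry.angle i x j = angle (i - x) (j - x) := by
  rw [EuclideanGeometry.angle, vsub_eq_sub, vsub_eq_sub]


/-- if the compact convex set `C` lies strictly to the left of the directed
segment from `i` to `j`, then the map `x ↦ ∠(i,x,j)` (the angle at `x`) attains its
maximum over `C` at a point of the boundary of `C`, and the function is unimodal:
its superlevel sets within `C` are convex (hence along the boundary of `C` the function
is unimodal). -/
theorem stmt5 (i j : E2) (hij : i ≠ j) (C : Set E2)
    (hC : Convex ℝ C) (hcomp : IsCompact C) (hne : C.Nonempty)
    (hleft : ∀ p ∈ C, 0 < cross2 (j - i) (p - i)) :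
    (∃ x ∈ frontier C, ∀ y ∈ C,
        EuclideanGeometry.angle i y j ≤ EuclideanGeometry.angle i x j) ∧
    (∀ γ : ℝ, Convex ℝ {x ∈ C | γ ≤ EuclideanGeometry.angle i x j}) := by
  have hq : ∀ x ∈ C, 0 < cross2 (i - x) (j - x) := by
    intro x hx; rw [cross_sub]; exact hleft x hx
  constructor
  · -- maximum attained on the frontier
    have hcont : ContinuousOn (fun x => EuclideanGeometry.angle i x j) C := by
      intro x hx
      have hqx := hq x hx
      have hc : Continuous fun x : E2 => ((i - x, j - x) : E2 × E2) := by continuity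
      have hca : ContinuousAt (fun y : E2 × E2 => angle y.1 y.2) ((i - x, j - x) : E2 × E2) :=
        InnerProductGeometry.continuousAt_angle (cross_ne_left _ _ hqx) (cross_ne_right _ _ hqx)
      have := hca.comp (x := x) hc.continuousAt
      have h2 : ContinuousAt (fun x => EuclideanGeometry.angle i x j) x := by
        simpa [Function.comp_def, eangle] using this
      exact h2.continuousWithinAt
    obtain ⟨x₀, hx₀C, hmax⟩ := hcomp.exists_isMaxOn hne hcont
    refine ⟨x₀, ?_, fun y hy => hmax hy⟩
    by_contra hfront
    have hint : x₀ ∈ interior C := by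
      have hclosed : IsClosed C := hcomp.isClosed
      have : x₀ ∈ closure C := subset_closure hx₀C
      rcases (em (x₀ ∈ interior C)) with h | h
      · exact h
      · exact absurd ⟨this, h⟩ hfront
    set M := EuclideanGeometry.angle i x₀ j with hMdef
    have hqx₀ := hq x₀ hx₀C
    obtain ⟨hM0, hMπ⟩ : 0 < M ∧ M < π := by
      rw [hMdef, eangle]; exact angle_mem _ _ hqx₀
    set s := Real.sin M with hsdef
    set c := Real.cos M with hcdef
    have hs : 0 < s := Real.sin_pos_of_pos_of_lt_pi hM0 hMπ
    -- g x₀ = 0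
    have hgx₀ : fγ i j s c x₀ = 0 := by
      rw [fγ, hsdef, hcdef, key_id _ _ hqx₀.le, hMdef, eangle, sub_self, Real.sin_zero, zero_mul]
    -- g ≥ 0 on C
    have hgC : ∀ y ∈ C, 0 ≤ fγ i j s c y := by
      intro y hy
      have := angle_le_iff (i - y) (j - y) (hq y hy) M hM0 hMπ
        (by rw [← eangle]; exact hmax hy)
      simpa [fγ] using this
    -- midpoint has g < 0
    set m : E2 := (2⁻¹ : ℝ) • (i + j) with hmdef
    have hm0 : m 0 = (i 0 + j 0) / 2 := by
      simp [hmdef, PiLp.smul_apply, PiLp.add_apply, smul_eq_mul]; ring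
    have hm1 : m 1 = (i 1 + j 1) / 2 := by
      simp [hmdef, PiLp.smul_apply, PiLp.add_apply, smul_eq_mul]; ring
    have hij2 : 0 < (i 0 - j 0)^2 + (i 1 - j 1)^2 := by
      rcases (sq_nonneg (i 0 - j 0)).lt_or_eq with h | h
      · positivity
      · rcases (sq_nonneg (i 1 - j 1)).lt_or_eq with h' | h'
        · positivity
        · exfalso
          apply hij
          have e0 : i 0 = j 0 := by nlinarith [sq_nonneg (i 0 - j 0)]
          have e1 : i 1 = j 1 := by nlinarith [sq_nonneg (i 1 - j 1)]
          ext k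
          fin_cases k <;> assumption
    have hgm : fγ i j s c m < 0 := by
      rw [fγ_coord, hm0, hm1]
      have : s * ((i 0 - (i 0 + j 0)/2) * (j 0 - (i 0 + j 0)/2)
          + (i 1 - (i 1 + j 1)/2) * (j 1 - (i 1 + j 1)/2))
        - c * ((i 0 - (i 0 + j 0)/2) * (j 1 - (i 1 + j 1)/2)
          - (i 1 - (i 1 + j 1)/2) * (j 0 - (i 0 + j 0)/2))
          = -(s * ((i 0 - j 0)^2 + (i 1 - j 1)^2)) / 4 := by ring
      rw [this]
      have : 0 < s * ((i 0 - j 0)^2 + (i 1 - j 1)^2) := mul_pos hs hij2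
      linarith
    -- pick a small step from x₀ toward m staying in C
    obtain ⟨ε, hε, hball⟩ : ∃ ε > 0, Metric.ball x₀ ε ⊆ C := by
      rcases Metric.mem_nhds_iff.mp (mem_interior_iff_mem_nhds.mp hint) with ⟨ε, hε, hb⟩
      exact ⟨ε, hε, hb⟩
    set t : ℝ := min (1/2) (ε / (2 * (‖m - x₀‖ + 1))) with htdef
    have hden : 0 < 2 * (‖m - x₀‖ + 1) := by positivity
    have ht0 : 0 < t := lt_min (by norm_num) (div_pos hε hden)
    have ht1 : t ≤ 1/2 := min_le_left _ _
    set z : E2 := (1 - t) • x₀ + t • m with hzdef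
    have hzC : z ∈ C := by
      apply hball
      have : z - x₀ = t • (m - x₀) := by
        rw [hzdef]; module
      rw [Metric.mem_ball, dist_eq_norm, this, norm_smul, Real.norm_eq_abs,
        abs_of_pos ht0]
      have h2 : t ≤ ε / (2 * (‖m - x₀‖ + 1)) := min_le_right _ _
      have h3 : t * ‖m - x₀‖ ≤ ε / (2 * (‖m - x₀‖ + 1)) * (‖m - x₀‖ + 1) :=
        mul_le_mul h2 (by linarith [norm_nonneg (m - x₀)]) (norm_nonneg _)
          (by positivity)
      have h4 : ε / (2 * (‖m - x₀‖ + 1)) * (‖m - x₀‖ + 1) = ε / 2 := by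
        field_simp
      linarith
    have hcvx := (fγ_convexOn i j s c hs.le).2 (mem_univ x₀) (mem_univ m)
      (by linarith : (0:ℝ) ≤ 1 - t) ht0.le (by ring)
    rw [← hzdef] at hcvx
    have : fγ i j s c z < 0 := by
      calc fγ i j s c z ≤ (1 - t) • fγ i j s c x₀ + t • fγ i j s c m := hcvx
        _ = t * fγ i j s c m := by rw [hgx₀]; simp [smul_eq_mul]
        _ < 0 := mul_neg_of_pos_of_neg ht0 hgm
    linarith [hgC z hzC]
  · -- superlevel sets are convex
    intro γ
    rcases le_or_gt γ 0 with hγ | hγ0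
    · have : {x ∈ C | γ ≤ EuclideanGeometry.angle i x j} = C := by
        ext x
        simp only [mem_setOf_eq, and_iff_left_iff_imp]
        intro _
        exact hγ.trans (EuclideanGeometry.angle_nonneg _ _ _)
      rw [this]; exact hC
    rcases le_or_gt π γ with hγπ | hγπ
    · have : {x ∈ C | γ ≤ EuclideanGeometry.angle i x j} = ∅ := by
        ext x
        simp only [mem_setOf_eq, mem_empty_iff_false, iff_false, not_and]
        intro hx hle
        have h2 := (angle_mem _ _ (hq x hx)).2
        rw [← eangle] at h2
        linarith
      rw [this]; exact convex_empty
    · have : {x ∈ C | γ ≤ EuclideanGeometry.angle i x j}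
          = C ∩ {x | fγ i j (Real.sin γ) (Real.cos γ) x ≤ 0} := by
        ext x
        simp only [mem_setOf_eq, mem_inter_iff]
        constructor
        · rintro ⟨hx, hle⟩
          refine ⟨hx, ?_⟩
          have := (angle_ge_iff _ _ (hq x hx) γ hγ0 hγπ).mp (by rwa [← eangle])
          simpa [fγ] using this
        · rintro ⟨hx, hle⟩
          refine ⟨hx, ?_⟩
          rw [eangle]
          exact (angle_ge_iff _ _ (hq x hx) γ hγ0 hγπ).mpr (by simpa [fγ] using hle)
      rw [this]
      exact hC.inter (convex_sublevel i j _ _ (Real.sin_pos_of_pos_of_lt_pi hγ0 hγπ).le)
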